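/- For the binary sparse in-context regression task with n = k = 1, σ_ε = 0, and single in-context example (x, xᵀw*) with x ~ N(0, I_d), the greedy-decoding prediction satisfies, for every reasoning length t ≥ 1, P( w_t^{greedy} = w* ) ≤ 1/2^{d-1} + 2/d. -/

import Mathlib

open Matrix Finset

/-- One gradient step for in-context regression. -/
noncomputable def gradStep {n d : ℕ} (X : Matrix (Fin n) (Fin d) ℝ) (y : Fin n → ℝ)
    (w : Fin d → ℝ) : Fin d → ℝ :=
  w - (1 / (n : ℝ)) • (Xᵀ.mulVec (X.mulVec w - y))

/-- ClipNorm: clip entries at 0 and normalize to a probability vector. -/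
noncomputable def clipNorm {d : ℕ} (v : Fin d → ℝ) : Fin d → ℝ :=
  fun i => max (v i) 0 / ∑ i', max (v i') 0

/-- 0/1 indicator vector of a finset of coordinates. -/
def indicatorVec {d : ℕ} (S : Finset (Fin d)) : Fin d → ℝ := fun i => if i ∈ S then 1 else 0

open scoped Classical in
/-- Probability of obtaining support `S` when sampling `k` distinct indices without
replacement according to the probability vector `q`. -/
noncomputable def sampleWoR {d : ℕ} (k : ℕ) (q : Fin d → ℝ) (S : Finset (Fin d)) : ℝ :=
  ∑ e : Fin k → Fin d,
    if Function.Injective e ∧ Finset.image e Finset.univ = S then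
      ∏ i : Fin k, q (e i) / (1 - ∑ j ∈ Finset.univ.filter (fun j => j < i), q (e j))
    else 0

/-- One-step transition probability of the sampling-decoding chain. -/
noncomputable def transProb {n d : ℕ} (X : Matrix (Fin n) (Fin d) ℝ) (y : Fin n → ℝ)
    (k : ℕ) (S S' : Finset (Fin d)) : ℝ :=
  sampleWoR k (clipNorm (gradStep X y (indicatorVec S))) S'

/-- Distribution of the sampling-decoding chain after `t` steps, started at `w₀ = 0`. -/
noncomputable def chainProb {n d : ℕ} (X : Matrix (Fin n) (Fin d) ℝ) (y : Fin n → ℝ)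
    (k : ℕ) : ℕ → Finset (Fin d) → ℝ
  | 0, S => if S = ∅ then 1 else 0
  | t + 1, S => ∑ S' : Finset (Fin d), chainProb X y k t S' * transProb X y k S' S

/-- `S` consists of `k` indices carrying the `k` largest values of `q`. -/
def IsTopK {d : ℕ} (k : ℕ) (q : Fin d → ℝ) (S : Finset (Fin d)) : Prop :=
  S.card = k ∧ ∀ i ∈ S, ∀ j ∉ S, q j ≤ q i

/-- Greedy-decoding iterates, with a tie-breaking top-k selector `sel`. -/
noncomputable def greedyIter {n d : ℕ} (X : Matrix (Fin n) (Fin d) ℝ) (y : Fin n → ℝ)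
    (k : ℕ) (sel : (Fin d → ℝ) → Finset (Fin d)) : ℕ → Finset (Fin d)
  | 0 => ∅
  | t + 1 => sel (clipNorm (gradStep X y (indicatorVec (greedyIter X y k sel t))))

/-- Number of votes for `S` among the `N` sampled reasoning outcomes `g`. -/
def countVotes {d : ℕ} {N : ℕ} (g : Fin N → Finset (Fin d)) (S : Finset (Fin d)) : ℕ :=
  (Finset.univ.filter fun j => g j = S).card

open scoped Classical in
/-- Probability that the majority-vote selector `vote` applied to `N` i.i.d. samples from
the distribution `f` on supports returns `Sstar`. -/
noncomputable def mvRecoverProb {d : ℕ} (f : Finset (Fin d) → ℝ) (N : ℕ)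
    (vote : (Fin N → Finset (Fin d)) → Finset (Fin d)) (Sstar : Finset (Fin d)) : ℝ :=
  ∑ g : Fin N → Finset (Fin d), (∏ j, f (g j)) * (if vote g = Sstar then 1 else 0)

open MeasureTheory ProbabilityTheory

/- STATEMENT 10: For binary sparse in-context regression with n = k = 1, σ_ε = 0, a
single in-context example (x, xᵀw*) with x ~ N(0, I_d): for every reasoning length
t ≥ 1 and every tie-breaking top-1 selector, P(w_t^greedy = w*) ≤ 1/2^{d−1} + 2/d. -/


/- ===== Auxiliary lemmas ===== -/

open scoped ENNReal

section Aux

instance : MeasureTheory.NullSingletonClass (gaussianReal 0 1) :=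
  ⟨fun y => gaussianReal_absolutelyContinuous 0 one_ne_zero (measure_singleton y)⟩

variable {d : ℕ}

lemma dot_indicator (x : Fin d → ℝ) (a : Fin d) : x ⬝ᵥ indicatorVec {a} = x a := by
  simp [dotProduct, indicatorVec]

lemma gradStep_apply (x : Fin d → ℝ) (y : Fin 1 → ℝ) (w : Fin d → ℝ) (i : Fin d) :
    gradStep (Matrix.of fun _ : Fin 1 => x) y w i = w i - x i * (x ⬝ᵥ w - y 0) := by
  simp [gradStep, Matrix.mulVec, dotProduct, Fin.sum_univ_one]

lemma sel_pair (sel : (Fin d → ℝ) → Finset (Fin d)) (hsel : ∀ q, IsTopK 1 q (sel q))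
    (v : Fin d → ℝ) (j1 j2 : Fin d)
    (hpos : 0 < max (v j1) (v j2))
    (hlt : ∀ i, i ≠ j1 → i ≠ j2 → max (v i) 0 < max (max (v j1) 0) (max (v j2) 0)) :
    sel (clipNorm v) = {j1} ∨ sel (clipNorm v) = {j2} := by
  set M := max (max (v j1) 0) (max (v j2) 0) with hMdef
  have hMpos : 0 < M := lt_of_lt_of_le hpos (max_le_max (le_max_left _ _) (le_max_left _ _))
  obtain ⟨j, hjM, hjmem⟩ : ∃ j, max (v j) 0 = M ∧ (j = j1 ∨ j = j2) := by
    rcases max_choice (max (v j1) 0) (max (v j2) 0) with h | h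
    · exact ⟨j1, h.symm, Or.inl rfl⟩
    · exact ⟨j2, h.symm, Or.inr rfl⟩
  have hZ : 0 < ∑ i', max (v i') 0 := by
    refine lt_of_lt_of_le hMpos ?_
    rw [← hjM]
    exact Finset.single_le_sum (f := fun i => max (v i) 0) (fun i _ => le_max_right _ _)
      (mem_univ j)
  obtain ⟨i0, hi0⟩ := Finset.card_eq_one.mp (hsel (clipNorm v)).1
  by_contra hcon
  push_neg at hcon
  have h1 : i0 ≠ j1 := fun h => hcon.1 (by rw [hi0, h])
  have h2 : i0 ≠ j2 := fun h => hcon.2 (by rw [hi0, h])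
  have hji0 : j ≠ i0 := by
    rcases hjmem with rfl | rfl
    · exact fun h => h1 h.symm
    · exact fun h => h2 h.symm
  have hle : clipNorm v j ≤ clipNorm v i0 :=
    (hsel (clipNorm v)).2 i0 (by rw [hi0]; exact mem_singleton_self _) j
      (by rw [hi0]; simpa using hji0)
  have hlt' : clipNorm v i0 < clipNorm v j := by
    unfold clipNorm
    rw [hjM]
    gcongr
    · exact hlt i0 h1 h2
  linarith

lemma greedy_invariant (x : Fin d → ℝ) (a m l : Fin d)
    (sel : (Fin d → ℝ) → Finset (Fin d)) (hsel : ∀ q, IsTopK 1 q (sel q))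
    (hm : ∀ i, i ≠ m → x i < x m) (hl : ∀ i, i ≠ l → x l < x i)
    (hm0 : 0 < x m) (hl0 : x l < 0) (ham : a ≠ m) (hal : a ≠ l) (ha0 : x a ≠ 0) :
    ∀ t : ℕ,
      greedyIter (Matrix.of fun _ : Fin 1 => x) (fun _ => x a) 1 sel (t + 1) = {m} ∨
      greedyIter (Matrix.of fun _ : Fin 1 => x) (fun _ => x a) 1 sel (t + 1) = {l} := by
  set X := Matrix.of fun _ : Fin 1 => x with hX
  set Y : Fin 1 → ℝ := fun _ => x a with hY
  have ham' : x a < x m := hm a ham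
  have hal' : x l < x a := hl a hal
  have hlm : l ≠ m := fun h => absurd (h ▸ hl0) (not_lt.mpr hm0.le)
  intro t
  induction t with
  | zero =>
    have hstep : greedyIter X Y 1 sel 1 =
        sel (clipNorm (gradStep X Y (indicatorVec (∅ : Finset (Fin d))))) := by
      simp [greedyIter]
    have hv : ∀ i, gradStep X Y (indicatorVec (∅ : Finset (Fin d))) i = x i * x a := by
      intro i
      rw [gradStep_apply]
      simp [indicatorVec, dotProduct, hY]
    rw [hstep]
    rcases ha0.lt_or_gt with hneg | hposa
    · refine Or.inr ((sel_pair sel hsel _ l l ?_ ?_).elim id id)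
      · rw [hv l]; rw [max_self]; nlinarith
      · intro i hi _
        rw [hv i, hv l, max_self]
        have h1 : x i * x a < x l * x a := by nlinarith [hl i hi]
        have h2 : (0:ℝ) < x l * x a := by nlinarith
        rw [max_eq_left h2.le]
        exact max_lt h1 h2
    · refine Or.inl ((sel_pair sel hsel _ m m ?_ ?_).elim id id)
      · rw [hv m]; rw [max_self]; nlinarith
      · intro i hi _
        rw [hv i, hv m, max_self]
        have h1 : x i * x a < x m * x a := by nlinarith [hm i hi]
        have h2 : (0:ℝ) < x m * x a := by nlinarith
        rw [max_eq_left h2.le]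
        exact max_lt h1 h2
  | succ t ih =>
    have hstep : greedyIter X Y 1 sel (t + 1 + 1) =
        sel (clipNorm (gradStep X Y (indicatorVec (greedyIter X Y 1 sel (t + 1))))) := by
      simp [greedyIter]
    rw [hstep]
    rcases ih with h | h <;> rw [h]
    · -- from {m}
      have hv : ∀ i, gradStep X Y (indicatorVec ({m} : Finset (Fin d))) i =
          (if i = m then 1 else 0) - x i * (x m - x a) := by
        intro i
        rw [gradStep_apply, dot_indicator]
        simp [indicatorVec, hY]
      apply sel_pair sel hsel _ m l
      · have : gradStep X Y (indicatorVec ({m} : Finset (Fin d))) l = - x l * (x m - x a) := by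
          rw [hv l]; simp [hlm]
        refine lt_of_lt_of_le ?_ (le_max_right _ _)
        rw [this]; nlinarith
      · intro i him hil
        have hvl : gradStep X Y (indicatorVec ({m} : Finset (Fin d))) l = - x l * (x m - x a) := by
          rw [hv l]; simp [hlm]
        have hvi : gradStep X Y (indicatorVec ({m} : Finset (Fin d))) i = - x i * (x m - x a) := by
          rw [hv i]; simp [him]
        refine lt_of_lt_of_le ?_ (le_max_right _ _)
        rw [hvl, hvi]
        have h2 : (0:ℝ) < - x l * (x m - x a) := by nlinarith
        rw [max_eq_left h2.le]
        exact max_lt (by nlinarith [hl i hil]) h2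
    · -- from {l}
      have hv : ∀ i, gradStep X Y (indicatorVec ({l} : Finset (Fin d))) i =
          (if i = l then 1 else 0) - x i * (x l - x a) := by
        intro i
        rw [gradStep_apply, dot_indicator]
        simp [indicatorVec, hY]
      apply sel_pair sel hsel _ m l
      · have : gradStep X Y (indicatorVec ({l} : Finset (Fin d))) m = - x m * (x l - x a) := by
          rw [hv m]; simp [hlm.symm]
        refine lt_of_lt_of_le ?_ (le_max_left _ _)
        rw [this]; nlinarith
      · intro i him hil
        have hvm : gradStep X Y (indicatorVec ({l} : Finset (Fin d))) m = - x m * (x l - x a) := by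
          rw [hv m]; simp [hlm.symm]
        have hvi : gradStep X Y (indicatorVec ({l} : Finset (Fin d))) i = - x i * (x l - x a) := by
          rw [hv i]; simp [hil]
        refine lt_of_lt_of_le ?_ (le_max_left _ _)
        rw [hvm, hvi]
        have h2 : (0:ℝ) < - x m * (x l - x a) := by nlinarith
        rw [max_eq_left h2.le]
        exact max_lt (by nlinarith [hm i him]) h2

open MeasureTheory ProbabilityTheory in
lemma gauss_map_neg : (gaussianReal 0 1).map (fun z : ℝ => -z) = gaussianReal 0 1 := by
  have h := gaussianReal_map_const_mul (μ := 0) (v := 1) (-1)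
  have he : (fun z : ℝ => -z) = (fun z : ℝ => (-1) * z) := by funext z; ring
  rw [he]
  rw [h]
  norm_num

open MeasureTheory ProbabilityTheory in
lemma gauss_Ici : gaussianReal 0 1 (Set.Ici (0:ℝ)) = 1/2 := by
  set ν := gaussianReal 0 1 with hν
  have h1 : ν (Set.Iic 0) = ν (Set.Ici 0) := by
    have : ν (Set.Iic (0:ℝ)) = ν.map (fun z => -z) (Set.Ici 0) := by
      rw [Measure.map_apply measurable_neg measurableSet_Ici]
      congr 1
      ext z
      simp
    rw [this, gauss_map_neg]
  have h2 : ν (Set.Iio 0) = ν (Set.Iic 0) := by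
    refine le_antisymm (measure_mono Set.Iio_subset_Iic_self) ?_
    calc ν (Set.Iic 0) = ν (Set.Iio 0 ∪ {0}) := by rw [Set.Iio_union_right]
      _ ≤ ν (Set.Iio 0) + ν {0} := measure_union_le _ _
      _ = ν (Set.Iio 0) := by rw [measure_singleton, add_zero]
  have h3 : ν (Set.Ici 0) + ν (Set.Iio 0) = 1 := by
    rw [← Set.compl_Ici (a := (0:ℝ))]
    rw [measure_add_measure_compl measurableSet_Ici]
    exact measure_univ
  have h4 : ν (Set.Ici 0) + ν (Set.Ici 0) = 1 := by rw [← h1, ← h2] at h3 ⊢; exact h3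
  have h5 : 2 * ν (Set.Ici 0) = 1 := by rw [two_mul]; exact h4
  rw [ENNReal.eq_div_iff two_ne_zero ENNReal.ofNat_ne_top]
  exact h5

open MeasureTheory ProbabilityTheory in
lemma gauss_Iic : gaussianReal 0 1 (Set.Iic (0:ℝ)) = 1/2 := by
  have h1 : gaussianReal 0 1 (Set.Iic (0:ℝ)) = (gaussianReal 0 1).map (fun z => -z) (Set.Ici 0) := by
    rw [Measure.map_apply measurable_neg measurableSet_Ici]
    congr 1
    ext z
    simp
  rw [h1, gauss_map_neg, gauss_Ici]

open MeasureTheory ProbabilityTheory in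
noncomputable abbrev gpi (d : ℕ) : Measure (Fin d → ℝ) :=
  Measure.pi fun _ : Fin d => gaussianReal 0 1

open MeasureTheory ProbabilityTheory in
lemma coord_zero_null (a : Fin d) : gpi d {x | x a = 0} = 0 :=
  Measure.pi_hyperplane _ a 0

open MeasureTheory ProbabilityTheory in
lemma coord_eq_null (i j : Fin d) (hij : i ≠ j) : gpi d {x | x i = x j} = 0 := by
  classical
  set p : Fin d → Prop := fun k => k = i with hp
  have mp := measurePreserving_piEquivPiSubtypeProd
    (α := fun _ : Fin d => ℝ) (fun _ : Fin d => gaussianReal 0 1) p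
  set e := MeasurableEquiv.piEquivPiSubtypeProd (fun _ : Fin d => ℝ) p with he
  set B : Set ((({k : Fin d // p k} → ℝ)) × ({k : Fin d // ¬ p k} → ℝ)) :=
    {q | q.1 ⟨i, rfl⟩ = q.2 ⟨j, hij.symm⟩} with hB
  have hBm : MeasurableSet B := by
    apply measurableSet_eq_fun
    · exact (measurable_pi_apply _).comp measurable_fst
    · exact (measurable_pi_apply _).comp measurable_snd
  have hpre : {x : Fin d → ℝ | x i = x j} = e ⁻¹' B := rfl
  rw [hpre, mp.measure_preimage hBm.nullMeasurableSet]
  rw [Measure.prod_apply hBm]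
  have hzero : ∀ u : {k : Fin d // p k} → ℝ,
      (Measure.pi fun _ : {k : Fin d // ¬ p k} => gaussianReal 0 1) (Prod.mk u ⁻¹' B) = 0 := by
    intro u
    have : Prod.mk u ⁻¹' B = {v : {k : Fin d // ¬ p k} → ℝ | v ⟨j, hij.symm⟩ = u ⟨i, rfl⟩} := by
      ext v; simp [hB, eq_comm]
    rw [this]
    exact Measure.pi_hyperplane _ _ _
  simp only [hzero]
  simp

open MeasureTheory ProbabilityTheory in
lemma argrel_le (hd : 0 < d) (b : Fin d) (R : ℝ → ℝ → Prop)
    (hR : MeasurableSet {p : ℝ × ℝ | R p.1 p.2}) (hasym : ∀ s t, R s t → ¬ R t s) :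
    gpi d {x | ∀ j, j ≠ b → R (x j) (x b)} ≤ 1 / d := by
  classical
  set E : Fin d → Set (Fin d → ℝ) := fun i => {x | ∀ j, j ≠ i → R (x j) (x i)} with hE
  have hEm : ∀ i, MeasurableSet (E i) := by
    intro i
    have : E i = ⋂ j, ⋂ (_ : j ≠ i), (fun x : Fin d → ℝ => (x j, x i)) ⁻¹' {p | R p.1 p.2} := by
      ext x; simp [hE]
    rw [this]
    exact MeasurableSet.iInter fun j => MeasurableSet.iInter fun hj =>
      hR.preimage ((measurable_pi_apply j).prodMk (measurable_pi_apply i))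
  have hdisj : Pairwise (Function.onFun Disjoint E) := by
    intro i i' hii'
    rw [Function.onFun, Set.disjoint_left]
    intro x hx hx'
    exact hasym _ _ (hx i' hii'.symm) (hx' i hii')
  have heq : ∀ i : Fin d, gpi d (E i) = gpi d (E b) := by
    intro i
    set e := Equiv.swap i b with hswap
    have mp := measurePreserving_piCongrLeft (fun _ : Fin d => gaussianReal 0 1) e
    set T := MeasurableEquiv.piCongrLeft (fun _ : Fin d => ℝ) e with hT
    have hprei : T ⁻¹' (E b) = E i := by
      have hei : e i = b := Equiv.swap_apply_left i b
      have heb : e b = i := Equiv.swap_apply_right i b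
      have hTx : ∀ (x : Fin d → ℝ) (k : Fin d), T x k = x (e k) := by
        intro x k
        conv_lhs => rw [← Equiv.apply_symm_apply e k]
        rw [show e.symm k = e k from by rw [hswap, Equiv.symm_swap]]
        exact MeasurableEquiv.piCongrLeft_apply_apply (β := fun _ : Fin d => ℝ) e x (e k)
      ext x
      simp only [Set.mem_preimage, hE, Set.mem_setOf_eq, hTx, heb]
      constructor
      · intro h j' hj'
        have h1 : e j' ≠ b := fun hc => hj' (e.injective (by rw [hc, hei]))
        have h2 := h (e j') h1
        rwa [show e (e j') = j' from by rw [hswap, Equiv.swap_apply_self]] at h2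
      · intro h j hj
        exact h (e j) (fun hc => hj (e.injective (by rw [hc, heb])))
    rw [← hprei, mp.measure_preimage (hEm b).nullMeasurableSet]
  have hsum : ∑ i : Fin d, gpi d (E i) = gpi d (⋃ i, E i) := by
    rw [measure_iUnion hdisj hEm, tsum_fintype]
  have hle1 : gpi d (⋃ i, E i) ≤ 1 := prob_le_one
  have hsum2 : (d : ℝ≥0∞) * gpi d (E b) ≤ 1 := by
    calc (d : ℝ≥0∞) * gpi d (E b) = ∑ _i : Fin d, gpi d (E b) := by
          rw [Finset.sum_const, card_univ, Fintype.card_fin, nsmul_eq_mul]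
      _ = ∑ i : Fin d, gpi d (E i) := by
          exact Finset.sum_congr rfl fun i _ => (heq i).symm
      _ ≤ 1 := hsum ▸ hle1
  have hd0 : (d : ℝ≥0∞) ≠ 0 := Nat.cast_ne_zero.mpr hd.ne'
  rw [ENNReal.le_div_iff_mul_le (Or.inl hd0) (Or.inl (ENNReal.natCast_ne_top d))]
  rw [mul_comm] at hsum2
  exact hsum2

lemma arith_bound (d : ℕ) (hd : 1 < d) :
    ((((0 + 0) + (1/2 : ℝ≥0∞)^d) + (1/2)^d) + 1/d) + 1/d ≤
      ENNReal.ofReal (1 / 2 ^ (d - 1) + 2 / (d : ℝ)) := by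
  have hdpos : (0:ℝ) < d := by exact_mod_cast (by omega : 0 < d)
  rw [ENNReal.ofReal_add (by positivity) (by positivity)]
  have e1 : (1/2 : ℝ≥0∞)^d + (1/2)^d = ENNReal.ofReal (1 / 2 ^ (d-1)) := by
    have h2 : (1 / 2 ^ (d-1) : ℝ) = (1/2 : ℝ)^(d-1) := by
      rw [one_div, one_div, inv_pow]
    rw [h2, ENNReal.ofReal_pow (by norm_num)]
    have h3 : ENNReal.ofReal (1/2 : ℝ) = (1/2 : ℝ≥0∞) := by
      rw [one_div, one_div, ENNReal.ofReal_inv_of_pos (by norm_num)]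
      norm_num
    rw [h3]
    have hd1 : d = (d - 1) + 1 := by omega
    calc (1/2 : ℝ≥0∞)^d + (1/2)^d = (1/2)^((d-1)+1) + (1/2)^((d-1)+1) := by rw [← hd1]
      _ = (1/2)^(d-1) * ((1/2) + (1/2)) := by rw [pow_succ]; ring
      _ = (1/2)^(d-1) := by
          rw [show (1/2 : ℝ≥0∞) + 1/2 = 1 from by rw [one_div]; exact ENNReal.inv_two_add_inv_two, mul_one]
  have e2 : (1/(d:ℝ≥0∞)) + 1/d = ENNReal.ofReal (2 / (d:ℝ)) := by
    rw [ENNReal.ofReal_div_of_pos hdpos, ENNReal.ofReal_natCast]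
    rw [ENNReal.ofReal_ofNat, ENNReal.div_add_div_same]
    norm_num
  calc ((((0 + 0) + (1/2 : ℝ≥0∞)^d) + (1/2)^d) + 1/d) + 1/d
      = ((1/2 : ℝ≥0∞)^d + (1/2)^d) + ((1/(d:ℝ≥0∞)) + 1/d) := by ring
    _ = ENNReal.ofReal (1 / 2 ^ (d-1)) + ENNReal.ofReal (2 / (d:ℝ)) := by rw [e1, e2]
    _ ≤ ENNReal.ofReal (1 / 2 ^ (d-1)) + ENNReal.ofReal (2 / (d:ℝ)) := le_rfl

end Aux

theorem stmt10 (d : ℕ) (hd : 1 < d) (Sstar : Finset (Fin d)) (hS : Sstar.card = 1)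
    (sel : (Fin d → ℝ) → Finset (Fin d)) (hsel : ∀ q, IsTopK 1 q (sel q))
    (t : ℕ) (ht : 1 ≤ t) :
    (Measure.pi fun _ : Fin d => gaussianReal 0 1)
      {x : Fin d → ℝ |
        greedyIter (Matrix.of fun _ : Fin 1 => x)
          (fun _ : Fin 1 => x ⬝ᵥ indicatorVec Sstar) 1 sel t = Sstar} ≤
      ENNReal.ofReal (1 / 2 ^ (d - 1) + 2 / (d : ℝ)) := by
  classical
  obtain ⟨a, ha⟩ := Finset.card_eq_one.mp hS
  subst ha
  have hd0 : 0 < d := by omega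
  set T : Set (Fin d → ℝ) := ⋃ (i : Fin d), ⋃ (j : Fin d), {x | i ≠ j ∧ x i = x j} with hTdef
  set Z : Set (Fin d → ℝ) := {x | x a = 0} with hZdef
  set AP : Set (Fin d → ℝ) := Set.univ.pi (fun _ : Fin d => Set.Ici (0:ℝ)) with hAPdef
  set AN : Set (Fin d → ℝ) := Set.univ.pi (fun _ : Fin d => Set.Iic (0:ℝ)) with hANdef
  set EM : Set (Fin d → ℝ) := {x | ∀ j, j ≠ a → x j < x a} with hEMdef
  set EL : Set (Fin d → ℝ) := {x | ∀ j, j ≠ a → x a < x j} with hELdef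
  have hsub : {x : Fin d → ℝ |
      greedyIter (Matrix.of fun _ : Fin 1 => x)
        (fun _ : Fin 1 => x ⬝ᵥ indicatorVec {a}) 1 sel t = {a}} ⊆
      T ∪ Z ∪ AP ∪ AN ∪ EM ∪ EL := by
    intro x hx
    by_contra hxbad
    simp only [Set.mem_union, not_or] at hxbad
    obtain ⟨⟨⟨⟨⟨hxT, hxZ⟩, hxAP⟩, hxAN⟩, hxEM⟩, hxEL⟩ := hxbad
    have hdist : ∀ i j : Fin d, i ≠ j → x i ≠ x j := by
      intro i j hij heq
      exact hxT (Set.mem_iUnion.mpr ⟨i, Set.mem_iUnion.mpr ⟨j, ⟨hij, heq⟩⟩⟩)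
    obtain ⟨m, -, hmmax⟩ := Finset.exists_max_image (univ : Finset (Fin d)) x ⟨a, mem_univ a⟩
    obtain ⟨l, -, hlmin⟩ := Finset.exists_min_image (univ : Finset (Fin d)) x ⟨a, mem_univ a⟩
    have hm : ∀ i, i ≠ m → x i < x m := fun i hi =>
      lt_of_le_of_ne (hmmax i (mem_univ i)) (hdist i m hi)
    have hl : ∀ i, i ≠ l → x l < x i := fun i hi =>
      lt_of_le_of_ne (hlmin i (mem_univ i)) (hdist l i hi.symm)
    have hm0 : 0 < x m := by
      have : ¬ ∀ i : Fin d, x i ≤ 0 := by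
        intro hall
        exact hxAN (fun i _ => hall i)
      push_neg at this
      obtain ⟨i, hi⟩ := this
      exact lt_of_lt_of_le hi (hmmax i (mem_univ i))
    have hl0 : x l < 0 := by
      have : ¬ ∀ i : Fin d, 0 ≤ x i := by
        intro hall
        exact hxAP (fun i _ => hall i)
      push_neg at this
      obtain ⟨i, hi⟩ := this
      exact lt_of_le_of_lt (hlmin i (mem_univ i)) hi
    have ham : a ≠ m := by
      intro h
      subst h
      exact hxEM (fun j hj => hm j hj)
    have hal : a ≠ l := by
      intro h
      subst h
      exact hxEL (fun j hj => hl j hj)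
    have ha0 : x a ≠ 0 := hxZ
    have hy : (fun _ : Fin 1 => x ⬝ᵥ indicatorVec {a}) = (fun _ : Fin 1 => x a) := by
      funext _
      exact dot_indicator x a
    rw [Set.mem_setOf_eq, hy] at hx
    rcases t with _ | s
    · omega
    · rcases greedy_invariant x a m l sel hsel hm hl hm0 hl0 ham hal ha0 s with h | h
      · exact ham (Finset.singleton_injective (hx.symm.trans h))
      · exact hal (Finset.singleton_injective (hx.symm.trans h))
  have hT0 : gpi d T = 0 := by
    apply measure_iUnion_null
    intro i
    apply measure_iUnion_null
    intro j
    by_cases hij : i = j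
    · have : {x : Fin d → ℝ | i ≠ j ∧ x i = x j} = ∅ := by
        ext x; simp [hij]
      rw [this]
      exact measure_empty
    · exact measure_mono_null (fun x hx => hx.2) (coord_eq_null i j hij)
  have hZ0 : gpi d Z = 0 := coord_zero_null a
  have hAPv : gpi d AP = (1/2 : ℝ≥0∞)^d := by
    rw [hAPdef, Measure.pi_pi]
    simp [gauss_Ici]
  have hANv : gpi d AN = (1/2 : ℝ≥0∞)^d := by
    rw [hANdef, Measure.pi_pi]
    simp [gauss_Iic]
  have hEMv : gpi d EM ≤ 1 / (d : ℝ≥0∞) := by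
    refine argrel_le hd0 a (fun s t => s < t) ?_ (fun s t => lt_asymm)
    exact measurableSet_lt measurable_fst measurable_snd
  have hELv : gpi d EL ≤ 1 / (d : ℝ≥0∞) := by
    refine argrel_le hd0 a (fun s t => t < s) ?_ (fun s t => lt_asymm)
    exact measurableSet_lt measurable_snd measurable_fst
  refine le_trans (le_trans (measure_mono hsub :
      (Measure.pi fun _ : Fin d => gaussianReal 0 1)
        {x : Fin d → ℝ |
          greedyIter (Matrix.of fun _ : Fin 1 => x)
            (fun _ : Fin 1 => x ⬝ᵥ indicatorVec {a}) 1 sel t = {a}} ≤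
        gpi d (T ∪ Z ∪ AP ∪ AN ∪ EM ∪ EL)) ?_) (arith_bound d hd)
  refine le_trans (measure_union_le _ _) (add_le_add ?_ hELv)
  refine le_trans (measure_union_le _ _) (add_le_add ?_ hEMv)
  refine le_trans (measure_union_le _ _) (add_le_add ?_ hANv.le)
  refine le_trans (measure_union_le _ _) (add_le_add ?_ hAPv.le)
  exact le_trans (measure_union_le _ _) (add_le_add hT0.le hZ0.le)
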